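/- Let H be a separable Hilbert space and let {f_k} (k ≥ 1) be a frame for H with a representation f_k = T^{k-1} f_1 for all k, where T : H → H is a bounded linear operator. Then for every dual frame {g_k} of {f_k}, the operator T satisfies T f = ∑_k ⟨f, g_k⟩ f_{k+1} for all f ∈ H. -/
import Mathlib

open scoped ComplexInnerProductSpace

/-- A sequence `f` in a Hilbert space is a frame if there exist constants
`A, B > 0` with `A‖x‖² ≤ ∑ₖ |⟨x, f k⟩|² ≤ B‖x‖²` for all `x`. -/
def IsFrame {ι H : Type*} [NormedAddCommGroup H] [InnerProductSpace ℂ H] (f : ι → H) : Prop :=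
  ∃ A B : ℝ, 0 < A ∧ 0 < B ∧ ∀ x : H,
    A * ‖x‖ ^ 2 ≤ ∑' i, ‖⟪x, f i⟫‖ ^ 2 ∧ ∑' i, ‖⟪x, f i⟫‖ ^ 2 ≤ B * ‖x‖ ^ 2

/-- If a frame `{f_k}` has the representation `f_k = T^k f_0` with `T` bounded, then for
every dual frame `{g_k}` one has `T x = ∑ₖ ⟨x, g k⟩ f (k+1)` for all `x`. -/
theorem stmt0 {H : Type*} [NormedAddCommGroup H] [InnerProductSpace ℂ H] [CompleteSpace H]
    [TopologicalSpace.SeparableSpace H]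
    (f g : ℕ → H) (T : H →L[ℂ] H)
    (hf : IsFrame f) (hrep : ∀ k, f k = (T ^ k) (f 0))
    (hg : IsFrame g) (hdual : ∀ x : H, HasSum (fun k => ⟪x, g k⟫ • f k) x) :
    ∀ x : H, HasSum (fun k => ⟪x, g k⟫ • f (k + 1)) (T x) := by
  intro x
  have h := (hdual x).mapL T
  convert h using 2 with k
  rw [map_smul, hrep k, hrep (k + 1), pow_succ']
  rfl
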